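/- arXiv:math/9902072 — 2 statements merged into one kernel-verified Lean document; each statement's English description precedes it below -/
import Mathlib

section
/- Let λ be a Young diagram inside the k×(n−k) rectangle with ℓ nonzero rows, and let r_{ij} be the shifts of λ. Let ε ∈ E satisfy ε_t = + for all t ≤ k − ℓ and ε_t = − for all t > k + λ_1. Then r_λ(ε) ≥ 0, and r_λ(ε) = 0 if and only if ε = w_λ·𝟏. -/
open scoped Classical

set_option maxHeartbeats 1000000
set_option synthInstance.maxHeartbeats 1000000

noncomputable section

/-- The field ℚ(v) of rational functions. -/
abbrev F : Type := RatFunc ℚ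

/-- The variable v. -/
def v : F := RatFunc.X

/-- The quantum integer [r] = (v^r - v^{-r})/(v - v^{-1}). -/
def qint (r : ℕ) : F := (v ^ r - v⁻¹ ^ r) / (v - v⁻¹)

/-- Sequences of n signs (`true` = `+`) with exactly k pluses. -/
abbrev Stt (n k : ℕ) := {ε : Fin n → Bool // (Finset.univ.filter fun t => ε t = true).card = k}

/-- The adjacent transposition s_m ∈ S_n (1-based: swaps positions m and m+1). -/
def sperm (n m : ℕ) : Equiv.Perm (Fin n) :=
  if h : 1 ≤ m ∧ m < n then Equiv.swap ⟨m - 1, by omega⟩ ⟨m, h.2⟩ else 1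

/-- Action of w ∈ S_n on sequences: (w·ε)_{w(t)} = ε_t. -/
def actE {n : ℕ} (w : Equiv.Perm (Fin n)) (ε : Fin n → Bool) : Fin n → Bool :=
  fun u => ε (w⁻¹ u)

lemma card_actE {n k : ℕ} (w : Equiv.Perm (Fin n)) (ε : Fin n → Bool)
    (h : (Finset.univ.filter fun t => ε t = true).card = k) :
    (Finset.univ.filter fun t => actE w ε t = true).card = k := by
  rw [← h]
  apply Finset.card_bij (fun t _ => w⁻¹ t)
  · intro a ha
    exact Finset.mem_filter.mpr ⟨Finset.mem_univ _, (Finset.mem_filter.mp ha).2⟩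
  · intro a _ b _ hab
    exact (Equiv.injective _) hab
  · intro b hb
    exact ⟨w b, Finset.mem_filter.mpr ⟨Finset.mem_univ _,
      by simpa [actE] using (Finset.mem_filter.mp hb).2⟩, by simp⟩

/-- Action of S_n on the set E of sequences with k pluses. -/
def actS {n k : ℕ} (w : Equiv.Perm (Fin n)) (ε : Stt n k) : Stt n k :=
  ⟨actE w ε.1, card_actE w ε.1 ε.2⟩

/-- The module M, free over ℚ(v) with basis E. -/
abbrev M (n k : ℕ) := Stt n k → F

/-- The basis vector of M corresponding to ε ∈ E. -/
def bv {n k : ℕ} (ε : Stt n k) : M n k := Pi.single ε 1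

/-- The sequence 𝟏 = (+,…,+,−,…,−) (k pluses then n−k minuses). -/
def oneSeq (n k : ℕ) : Fin n → Bool := fun t => decide ((t : ℕ) < k)

lemma card_oneSeq (n k : ℕ) (h : k ≤ n) :
    (Finset.univ.filter fun t => oneSeq n k t = true).card = k := by
  have : (Finset.univ.filter fun t => oneSeq n k t = true)
      = Finset.univ.map (Fin.castLEEmb h) := by
    ext t
    simp only [Finset.mem_filter, Finset.mem_univ, true_and, oneSeq, decide_eq_true_eq,
      Finset.mem_map]
    constructor
    · intro ht; exact ⟨⟨t, ht⟩, rfl⟩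
    · rintro ⟨s, rfl⟩; exact s.2
  rw [this, Finset.card_map, Finset.card_univ, Fintype.card_fin]

/-- 𝟏 as an element of E. -/
def oneS (n k : ℕ) (h : k ≤ n) : Stt n k := ⟨oneSeq n k, card_oneSeq n k h⟩

/-- The operator T_m on M (1 ≤ m ≤ n−1), defined on basis elements. -/
def Thk (n k : ℕ) (m : ℕ) : M n k →ₗ[F] M n k :=
  (Pi.basisFun F (Stt n k)).constr ℕ fun ε =>
    if h : 1 ≤ m ∧ m < n then
      let a := ε.1 ⟨m - 1, by omega⟩
      let b := ε.1 ⟨m, h.2⟩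
      if a = true ∧ b = false then bv (actS (sperm n m) ε)
      else if a = b then (-v⁻¹) • bv ε
      else bv (actS (sperm n m) ε) + (v - v⁻¹) • bv ε
    else 0

/-- A Young diagram inside the k×(n−k) rectangle, given by its row lengths
(1-based: row i has lam i boxes). -/
def IsYoung (n k : ℕ) (lam : ℕ → ℕ) : Prop :=
  (∀ i, 1 ≤ i → lam (i + 1) ≤ lam i) ∧ lam 1 ≤ n - k ∧ (∀ i, k < i → lam i = 0)

/-- The boxes of λ, listed row by row from the bottom row to the top row,
each row from its last box to its first (so box (1,1) comes last). -/
def boxList (k : ℕ) (lam : ℕ → ℕ) : List (ℕ × ℕ) :=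
  ((List.range k).reverse.map fun i' =>
    (List.range (lam (i' + 1))).reverse.map fun j' => (i' + 1, j' + 1)).flatten

/-- The word of w_λ: letter k+j−i for box (i,j). -/
def wword (k : ℕ) (lam : ℕ → ℕ) : List ℕ := (boxList k lam).map fun b => k + b.2 - b.1

/-- The permutation w_λ = ∏_{(i,j)∈λ} s_{k+j−i} (box (1,1) rightmost). -/
def wperm (n k : ℕ) (lam : ℕ → ℕ) : Equiv.Perm (Fin n) := ((wword k lam).map (sperm n)).prod

/-- w_λ·𝟏 as an element of E. -/
def wSt (n k : ℕ) (h : k ≤ n) (lam : ℕ → ℕ) : Stt n k := actS (wperm n k lam) (oneS n k h)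

/-- r is the system of shifts of λ: r_{ij} = max(r_{i,j+1}, r_{i+1,j}) + 1 on boxes of λ,
and r_{ij} = 0 off λ. -/
def IsShifts (lam : ℕ → ℕ) (r : ℕ → ℕ → ℕ) : Prop :=
  ∀ i j, r i j = if 1 ≤ i ∧ 1 ≤ j ∧ j ≤ lam i then max (r i (j + 1)) (r (i + 1) j) + 1 else 0

/-- The operator X_λ = ∏_{(i,j)∈λ} (T_{k+j−i} − v^{r_{ij}}/[r_{ij}]), the factor of
box (1,1) applied first. -/
def Xop (n k : ℕ) (lam : ℕ → ℕ) (r : ℕ → ℕ → ℕ) : Module.End F (M n k) :=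
  ((boxList k lam).map fun b =>
    (Thk n k (k + b.2 - b.1) - (v ^ r b.1 b.2 / qint (r b.1 b.2)) • (1 : Module.End F (M n k)) : Module.End F (M n k))).prod

/-- O(v^m): rational functions with a zero of order ≥ m at v = 0. -/
def Ozero (m : ℕ) : Set F :=
  {f | ∃ p q : Polynomial ℚ, Polynomial.eval 0 q ≠ 0 ∧
        f = v ^ m * (algebraMap (Polynomial ℚ) F p / algebraMap (Polynomial ℚ) F q)}

/-- Value of a sequence at the 1-based position t. -/
def posVal {n : ℕ} (ε : Fin n → Bool) (t : ℕ) : Bool :=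
  if h : 1 ≤ t ∧ t ≤ n then ε ⟨t - 1, by omega⟩ else false

/-- a(i) = k + λ_i − i + 1 for 1 ≤ i ≤ k, and a(i) = 0 for i > k. -/
def aF (k : ℕ) (lam : ℕ → ℕ) (i : ℕ) : ℕ := if i ≤ k then k + lam i + 1 - i else 0

/-- The contribution r_t(ε) to the weight. -/
def weightT (k : ℕ) (lam : ℕ → ℕ) (r : ℕ → ℕ → ℕ) {n : ℕ} (ε : Fin n → Bool) (t : ℕ) : ℕ :=
  ∑ i ∈ Finset.Icc 1 k,
    ((if posVal ε t = false ∧ 1 ≤ lam i ∧ t = aF k lam i then r i (lam i) - 1 else 0) +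
     (if posVal ε t = true ∧ aF k lam (i + 1) < t ∧ t < aF k lam i then r i (t + i - k) else 0))

/-- The weight r_λ(ε) = Σ_{t=1}^n r_t(ε). -/
def weight (n k : ℕ) (lam : ℕ → ℕ) (r : ℕ → ℕ → ℕ) (ε : Fin n → Bool) : ℕ :=
  ∑ t ∈ Finset.Icc 1 n, weightT k lam r ε t

/-- 𝓛_λ = Σ_ε O(v^{r_λ(ε)}) ε. -/
def Lset (n k : ℕ) (lam : ℕ → ℕ) (r : ℕ → ℕ → ℕ) : Set (M n k) :=
  {m | ∀ ε : Stt n k, m ε ∈ Ozero (weight n k lam r ε.1)}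

/-- The length (number of inversions) of a permutation. -/
def len {n : ℕ} (w : Equiv.Perm (Fin n)) : ℕ :=
  (Finset.univ.filter fun p : Fin n × Fin n => p.1 < p.2 ∧ w p.2 < w p.1).card

/-- The parabolic subgroup W_J = S_k × S_{n−k}: permutations mapping {1,…,k} to itself. -/
def WJ (n k : ℕ) : Set (Equiv.Perm (Fin n)) :=
  {σ | ∀ t : Fin n, (t : ℕ) < k → ((σ t : ℕ) < k)}

/-- W^J: permutations of minimal length in their coset w·W_J. -/
def Wmin (n k : ℕ) : Set (Equiv.Perm (Fin n)) :=
  {w | ∀ σ ∈ WJ n k, len w ≤ len (w * σ)}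

/-- The variable x_p (1-based position p) in ℚ(v)[x_1,…,x_n]. -/
def xv (n p : ℕ) : MvPolynomial (Fin n) F :=
  if h : 1 ≤ p ∧ p ≤ n then MvPolynomial.X ⟨p - 1, by omega⟩ else 0

/-- Exchange of the variables x_i and x_{i+1} (1-based, 1 ≤ i ≤ n−1). -/
def swapf (n i : ℕ) (f : MvPolynomial (Fin n) F) : MvPolynomial (Fin n) F :=
  if h : 1 ≤ i ∧ i < n then
    MvPolynomial.rename (Equiv.swap ⟨i - 1, by omega⟩ ⟨i, h.2⟩) f
  else f

/-- The divided difference ∂_i f = (f − s_i f)/(x_i − x_{i+1}). -/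
def ddiff (n i : ℕ) (f : MvPolynomial (Fin n) F) : MvPolynomial (Fin n) F :=
  if h : ∃ g, f - swapf n i f = (xv n i - xv n (i + 1)) * g then h.choose else 0

/-- The operator ∇_i f = (v x_{i+1} − v⁻¹ x_i)·∂_i f. -/
def nabla (n i : ℕ) (f : MvPolynomial (Fin n) F) : MvPolynomial (Fin n) F :=
  (MvPolynomial.C v * xv n (i + 1) - MvPolynomial.C v⁻¹ * xv n i) * ddiff n i f

/-- Parenthesis matching: minuses (`false`) are openers, pluses (`true`) are closers;
each plus is matched with the most recent unmatched minus, i.e. each minus with the first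
subsequent unmatched plus.  Returns the list of matched pairs (p,q) of 1-based positions
and the list of unmatched minus positions. -/
def matchAux : List Bool → ℕ → List ℕ → List (ℕ × ℕ) × List ℕ
  | [], _, stack => ([], stack)
  | b :: rest, pos, stack =>
    if b then
      match stack with
      | [] => matchAux rest (pos + 1) []
      | p :: stack' =>
        let res := matchAux rest (pos + 1) stack'
        ((p, pos) :: res.1, res.2)
    else matchAux rest (pos + 1) (pos :: stack)

/-- d(ε) = #{(p,q) : p < q, ε_p = −, ε_q = +}. -/
def dstat {n : ℕ} (ε : Fin n → Bool) : ℕ :=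
  (Finset.univ.filter fun pq : Fin n × Fin n =>
    pq.1 < pq.2 ∧ ε pq.1 = false ∧ ε pq.2 = true).card

/-- The polynomial Q_ε. -/
def Qpoly (n : ℕ) (ε : Fin n → Bool) : MvPolynomial (Fin n) F :=
  MvPolynomial.C (v⁻¹ ^ dstat ε) *
    ((matchAux (List.ofFn ε) 1 []).1.map fun pq =>
        xv n pq.1 - MvPolynomial.C (v ^ (pq.2 + 1 - pq.1)) * xv n pq.2).prod *
    ((matchAux (List.ofFn ε) 1 []).2.map fun p => xv n p).prod

/-- The operator T_m on M′ (the parabolic module induced from T_j ↦ v). -/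
def Thk' (n k : ℕ) (m : ℕ) : M n k →ₗ[F] M n k :=
  (Pi.basisFun F (Stt n k)).constr ℕ fun ε =>
    if h : 1 ≤ m ∧ m < n then
      let a := ε.1 ⟨m - 1, by omega⟩
      let b := ε.1 ⟨m, h.2⟩
      if a = true ∧ b = false then bv (actS (sperm n m) ε)
      else if a = b then v • bv ε
      else bv (actS (sperm n m) ε) + (v - v⁻¹) • bv ε
    else 0

/-- The map Φ : M′ → ℚ(v)[x_1,…,x_n], ε ↦ v^{−d(ε)} ∏_{t : ε_t = −} x_t. -/
def Phi (n k : ℕ) : M n k →ₗ[F] MvPolynomial (Fin n) F :=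
  (Pi.basisFun F (Stt n k)).constr ℕ fun ε =>
    MvPolynomial.C (v⁻¹ ^ dstat ε.1) *
      ∏ t ∈ Finset.univ.filter (fun t => ε.1 t = false), MvPolynomial.X t

/-- The space P(k,n): polynomials homogeneous of total degree n−k, of degree ≤ 1 in each
variable. -/
def Pspace (n k : ℕ) : Set (MvPolynomial (Fin n) F) :=
  {f | f.IsHomogeneous (n - k) ∧ ∀ t : Fin n, f.degreeOf t ≤ 1}


section AuxProof

lemma lamAnti {n k : ℕ} {lam : ℕ → ℕ} (hY : IsYoung n k lam) :
    ∀ i j, 1 ≤ i → i ≤ j → lam j ≤ lam i := by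
  intro i j h1 hij
  induction j, hij using Nat.le_induction with
  | base => exact le_rfl
  | succ j hij ih => exact le_trans (hY.1 j (le_trans h1 hij)) ih

lemma aF_eq (k : ℕ) (lam : ℕ → ℕ) {i : ℕ} (hi : i ≤ k) :
    aF k lam i = k + lam i + 1 - i := by simp [aF, hi]

lemma aF_zero (k : ℕ) (lam : ℕ → ℕ) {i : ℕ} (hi : k < i) : aF k lam i = 0 := by
  simp [aF]; omega

lemma aAnti {n k : ℕ} {lam : ℕ → ℕ} (hY : IsYoung n k lam) {i j : ℕ}
    (h1 : 1 ≤ i) (hij : i ≤ j) (hk : j ≤ k) : aF k lam j ≤ aF k lam i := by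
  have := lamAnti hY i j h1 hij
  rw [aF_eq k lam hk, aF_eq k lam (le_trans hij hk)]
  omega

lemma aAntiStrict {n k : ℕ} {lam : ℕ → ℕ} (hY : IsYoung n k lam) {i j : ℕ}
    (h1 : 1 ≤ i) (hij : i < j) (hk : j ≤ k) : aF k lam j < aF k lam i := by
  have := lamAnti hY i j h1 (le_of_lt hij)
  rw [aF_eq k lam hk, aF_eq k lam (le_trans (le_of_lt hij) hk)]
  omega

lemma actE_one {n : ℕ} (ε : Fin n → Bool) : actE 1 ε = ε := by
  funext u; simp [actE]

lemma actE_mul {n : ℕ} (w1 w2 : Equiv.Perm (Fin n)) (ε : Fin n → Bool) :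
    actE (w1 * w2) ε = actE w1 (actE w2 ε) := by
  funext u; simp [actE, mul_inv_rev]

lemma actE_listProd {n : ℕ} (L : List ℕ) (ε : Fin n → Bool) :
    actE ((L.map (sperm n)).prod) ε = L.foldr (fun m acc => actE (sperm n m) acc) ε := by
  induction L with
  | nil => simp [actE_one]
  | cons a t ih => rw [List.map_cons, List.prod_cons, actE_mul, ih, List.foldr_cons]

lemma actE_sperm_apply {n : ℕ} (m : ℕ) (h1 : 1 ≤ m) (h2 : m < n) (ε : Fin n → Bool) (u : Fin n) :
    actE (sperm n m) ε u = ε (Equiv.swap ⟨m - 1, by omega⟩ ⟨m, h2⟩ u) := by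
  simp [actE, sperm, h1, h2, Equiv.swap_inv]

lemma actE_sperm_val {n : ℕ} (m : ℕ) (h1 : 1 ≤ m) (h2 : m < n) (ε : Fin n → Bool) (u : Fin n) :
    actE (sperm n m) ε u =
      if (u : ℕ) = m - 1 then ε ⟨m, h2⟩
      else if (u : ℕ) = m then ε ⟨m - 1, by omega⟩
      else ε u := by
  rw [actE_sperm_apply m h1 h2]
  by_cases hA : (u : ℕ) = m - 1
  · have hu : u = ⟨m - 1, by omega⟩ := Fin.ext hA
    rw [hu, Equiv.swap_apply_left, if_pos rfl]
  · by_cases hB : (u : ℕ) = m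
    · have hu : u = ⟨m, h2⟩ := Fin.ext hB
      rw [hu, Equiv.swap_apply_right, if_neg (show ¬(m = m - 1) by omega), if_pos rfl]
    · have hs : Equiv.swap (⟨m - 1, by omega⟩ : Fin n) ⟨m, h2⟩ u = u :=
        Equiv.swap_apply_of_ne_of_ne (fun hc => hA (congrArg Fin.val hc))
          (fun hc => hB (congrArg Fin.val hc))
      rw [hs, if_neg hA, if_neg hB]

lemma moveLemma (n p : ℕ) : ∀ (L : ℕ) (hL : p + L < n) (ε : Fin n → Bool),
    ε ⟨p, by omega⟩ = true →
    (∀ d, 1 ≤ d → d ≤ L → ∀ (h : p + d < n), ε ⟨p + d, h⟩ = false) →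
    ((List.range L).reverse.map (fun j => p + 1 + j)).foldr
        (fun m acc => actE (sperm n m) acc) ε
      = fun u : Fin n => if (u : ℕ) = p + L then true else if (u : ℕ) = p then false else ε u := by
  intro L
  induction L with
  | zero =>
    intro hL ε hp hm
    funext u
    simp only [List.range_zero, List.reverse_nil, List.map_nil, List.foldr_nil]
    by_cases h : (u : ℕ) = p
    · rw [if_pos (by omega)]
      have hu : u = ⟨p, by omega⟩ := Fin.ext h
      rw [hu]; exact hp
    · rw [if_neg (by omega), if_neg h]
  | succ L ih =>
    intro hL ε hp hm
    have hL' : p + L < n := by omega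
    have word : ((List.range (L + 1)).reverse.map (fun j => p + 1 + j))
        = (p + 1 + L) :: ((List.range L).reverse.map (fun j => p + 1 + j)) := by
      rw [List.range_succ]
      simp
    rw [word, List.foldr_cons, ih hL' ε hp (fun d h1 h2 h => hm d h1 (by omega) h)]
    funext u
    rw [actE_sperm_val (p + 1 + L) (by omega) (by omega)]
    simp only
    by_cases hA : (u : ℕ) = p + L
    · rw [if_pos (by omega : (u : ℕ) = p + 1 + L - 1)]
      rw [if_neg (by omega), if_neg (by omega)]
      have hval : ε ⟨p + 1 + L, by omega⟩ = false := by
        have : (⟨p + 1 + L, by omega⟩ : Fin n) = ⟨p + (L + 1), by omega⟩ :=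
          Fin.ext (by change p + 1 + L = p + (L + 1); omega)
        rw [this]; exact hm (L + 1) (by omega) le_rfl (by omega)
      rw [hval]
      rcases Nat.eq_zero_or_pos L with h0 | h0
      · rw [if_neg (by omega), if_pos (by omega)]
      · rw [if_neg (by omega), if_neg (by omega)]
        have hu : u = ⟨p + L, by omega⟩ := Fin.ext hA
        rw [hu]
        exact (hm L (by omega) (by omega) (by omega)).symm
    · by_cases hB : (u : ℕ) = p + 1 + L
      · rw [if_neg (by omega), if_pos hB]
        rw [if_pos (by change p + 1 + L - 1 = p + L; omega :
          ((⟨p + 1 + L - 1, by omega⟩ : Fin n) : ℕ) = p + L)]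
        rw [if_pos (by omega)]
      · rw [if_neg (by omega), if_neg hB, if_neg hA, if_neg (by omega : ¬ (u : ℕ) = p + (L + 1))]

end AuxProof

section RowsProof

lemma rowsLemma (n k : ℕ) (hk : 0 < k) (hkn : k < n) (lam : ℕ → ℕ) (hY : IsYoung n k lam) :
    ∀ m, m ≤ k →
    (((List.range m).reverse.map fun i' =>
        (List.range (lam (i' + 1))).reverse.map (fun j' => k + j' - i')).flatten).foldr
        (fun m acc => actE (sperm n m) acc) (oneSeq n k)
      = fun u : Fin n => decide ((u : ℕ) + 1 ≤ k - m ∨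
          ∃ i, 1 ≤ i ∧ i ≤ m ∧ (u : ℕ) + 1 = aF k lam i) := by
  intro m
  induction m with
  | zero =>
    intro _
    funext u
    simp only [List.range_zero, List.reverse_nil, List.map_nil, List.flatten_nil,
      List.foldr_nil, oneSeq]
    rw [decide_eq_decide]
    constructor
    · intro h; exact Or.inl (by omega)
    · rintro (h | ⟨i, h1, h2, _⟩) <;> omega
  | succ m ih =>
    intro hm1
    have hmk : m < k := hm1
    have expand : (List.range (m + 1)).reverse = m :: (List.range m).reverse := by
      rw [List.range_succ]; simp
    rw [expand, List.map_cons, List.flatten_cons, List.foldr_append, ih (by omega)]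
    have hfun : ((List.range (lam (m + 1))).reverse.map (fun j' => k + j' - m))
        = ((List.range (lam (m + 1))).reverse.map (fun j => (k - (m + 1)) + 1 + j)) := by
      congr 1
      funext j'
      omega
    have hlam1 : lam (m + 1) ≤ lam 1 := lamAnti hY 1 (m + 1) le_rfl (by omega)
    have hpn : (k - (m + 1)) + lam (m + 1) < n := by
      have := hY.2.1; omega
    have ham1 : aF k lam (m + 1) = k - m + lam (m + 1) := by
      rw [aF_eq k lam hm1]; omega
    rw [hfun, moveLemma n (k - (m + 1)) (lam (m + 1)) hpn _
      (by
        simp only [decide_eq_true_eq]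
        exact Or.inl (by change k - (m + 1) + 1 ≤ k - m; omega))
      (by
        intro d h1 h2 h
        simp only [decide_eq_false_iff_not]
        rintro (hc | ⟨i, g1, g2, g3⟩)
        · change k - (m + 1) + d + 1 ≤ k - m at hc; omega
        · change k - (m + 1) + d + 1 = aF k lam i at g3
          have hge : aF k lam m ≤ aF k lam i := aAnti hY g1 g2 (by omega)
          have hm1' : 1 ≤ m := le_trans g1 g2
          have hlm : lam (m + 1) ≤ lam m := hY.1 m hm1'
          rw [aF_eq k lam (by omega : m ≤ k)] at hge
          omega)]
    funext u
    by_cases hA : (u : ℕ) = (k - (m + 1)) + lam (m + 1)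
    · rw [if_pos hA]
      symm
      rw [decide_eq_true_eq]
      exact Or.inr ⟨m + 1, by omega, le_rfl, by omega⟩
    · rw [if_neg hA]
      by_cases hB : (u : ℕ) = k - (m + 1)
      · rw [if_pos hB]
        symm
        rw [decide_eq_false_iff_not]
        rintro (hc | ⟨i, g1, g2, g3⟩)
        · omega
        · have hge : aF k lam (m + 1) ≤ aF k lam i := aAnti hY g1 g2 hm1
          omega
      · rw [if_neg hB, decide_eq_decide]
        constructor
        · rintro (hc | ⟨i, g1, g2, g3⟩)
          · exact Or.inl (by omega)
          · exact Or.inr ⟨i, g1, by omega, g3⟩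
        · rintro (hc | ⟨i, g1, g2, g3⟩)
          · exact Or.inl (by omega)
          · rcases Nat.lt_or_ge i (m + 1) with h | h
            · exact Or.inr ⟨i, g1, by omega, g3⟩
            · exfalso
              have hieq : i = m + 1 := by omega
              rw [hieq] at g3
              omega
end RowsProof

section WstProof

lemma wword_eq (k : ℕ) (lam : ℕ → ℕ) :
    wword k lam = ((List.range k).reverse.map fun i' =>
      (List.range (lam (i' + 1))).reverse.map (fun j' => k + j' - i')).flatten := by
  unfold wword boxList
  rw [List.map_flatten, List.map_map]
  congr 1
  apply List.map_congr_left
  intro i' _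
  simp only [Function.comp_apply, List.map_map]
  apply List.map_congr_left
  intro j' _
  simp only [Function.comp_apply]
  omega

lemma wSt_eq (n k : ℕ) (hk : 0 < k) (hkn : k < n) (lam : ℕ → ℕ) (hY : IsYoung n k lam) :
    (wSt n k hkn.le lam).1 = fun u : Fin n =>
      decide (∃ i, 1 ≤ i ∧ i ≤ k ∧ (u : ℕ) + 1 = aF k lam i) := by
  show actE (wperm n k lam) (oneSeq n k) = _
  rw [wperm, wword_eq, actE_listProd, rowsLemma n k hk hkn lam hY k le_rfl]
  funext u
  rw [decide_eq_decide]
  constructor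
  · rintro (h | h)
    · omega
    · exact h
  · exact Or.inr

end WstProof


/-- If λ has ℓ nonzero rows, r are the shifts of λ, and ε ∈ E has
ε_t = + for t ≤ k−ℓ and ε_t = − for t > k+λ₁, then r_λ(ε) ≥ 0, with equality iff
ε = w_λ·𝟏. -/
theorem weight_nonneg_eq_zero_iff (n k : ℕ) (hk : 0 < k) (hkn : k < n)
    (lam : ℕ → ℕ) (hY : IsYoung n k lam)
    (ℓ : ℕ) (hl1 : ∀ i, 1 ≤ i → i ≤ ℓ → 1 ≤ lam i) (hl2 : ∀ i, ℓ < i → lam i = 0)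
    (r : ℕ → ℕ → ℕ) (hr : IsShifts lam r)
    (ε : Stt n k)
    (hplus : ∀ t : Fin n, (t : ℕ) + 1 ≤ k - ℓ → ε.1 t = true)
    (hminus : ∀ t : Fin n, k + lam 1 < (t : ℕ) + 1 → ε.1 t = false) :
    0 ≤ weight n k lam r ε.1 ∧
    (weight n k lam r ε.1 = 0 ↔ ε = wSt n k hkn.le lam) := by
  classical
  have hwSt := wSt_eq n k hk hkn lam hY
  set tf : Fin n → Bool :=
    fun u : Fin n => decide (∃ i, 1 ≤ i ∧ i ≤ k ∧ (u : ℕ) + 1 = aF k lam i) with htf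
  have htf' : ∀ u : Fin n, tf u = true ↔ ∃ i, 1 ≤ i ∧ i ≤ k ∧ (u : ℕ) + 1 = aF k lam i := by
    intro u
    simp only [htf, decide_eq_true_eq]
  -- bounds on aF
  have haux : ∀ i, 1 ≤ i → i ≤ k → 1 ≤ aF k lam i ∧ aF k lam i ≤ n := by
    intro i h1 h2
    have h3 : aF k lam i ≤ aF k lam 1 := aAnti hY le_rfl h1 h2
    have h4 : lam 1 ≤ n - k := hY.2.1
    rw [aF_eq k lam h2, aF_eq k lam (show 1 ≤ k by omega)] at h3
    rw [aF_eq k lam h2]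
    omega
  set aPos : Finset (Fin n) := Finset.univ.filter
    (fun u : Fin n => ∃ i, 1 ≤ i ∧ i ≤ k ∧ (u : ℕ) + 1 = aF k lam i) with haPos
  have h0n : 0 < n := by omega
  have hcard : aPos.card = k := by
    have hbij : (Finset.Icc 1 k).card = aPos.card := by
      apply Finset.card_bij (fun i hi => (⟨aF k lam i - 1, by
        rw [Finset.mem_Icc] at hi
        have := (haux i hi.1 hi.2).2; omega⟩ : Fin n))
      · intro i hi
        rw [Finset.mem_Icc] at hi
        simp only [haPos, Finset.mem_filter, Finset.mem_univ, true_and]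
        refine ⟨i, hi.1, hi.2, ?_⟩
        have := (haux i hi.1 hi.2).1
        change aF k lam i - 1 + 1 = aF k lam i
        omega
      · intro a ha b hb hab
        have ha' := Finset.mem_Icc.mp ha
        have hb' := Finset.mem_Icc.mp hb
        have hA := (haux a ha'.1 ha'.2).1
        have hB := (haux b hb'.1 hb'.2).1
        have hval : aF k lam a - 1 = aF k lam b - 1 := congrArg Fin.val hab
        by_contra hne
        rcases Nat.lt_or_ge a b with h | h
        · have := aAntiStrict hY ha'.1 h hb'.2; omega
        · have h' : b < a := by omega
          have := aAntiStrict hY hb'.1 h' ha'.2; omega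
      · intro u hu
        simp only [haPos, Finset.mem_filter, Finset.mem_univ, true_and] at hu
        obtain ⟨i, h1, h2, h3⟩ := hu
        exact ⟨i, Finset.mem_Icc.mpr ⟨h1, h2⟩, Fin.ext (by change aF k lam i - 1 = (u : ℕ); omega)⟩
    rw [← hbij, Nat.card_Icc]
    omega
  refine ⟨Nat.zero_le _, ?_⟩
  constructor
  · -- weight = 0 → ε = wSt
    intro hw
    simp only [weight] at hw
    have hz : ∀ t ∈ Finset.Icc 1 n, ∀ i ∈ Finset.Icc 1 k,
        (if posVal ε.1 t = true ∧ aF k lam (i + 1) < t ∧ t < aF k lam i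
          then r i (t + i - k) else 0) = 0 := by
      intro t ht i hi
      have h1 := (Finset.sum_eq_zero_iff.mp hw) t ht
      simp only [weightT] at h1
      have h2 := (Finset.sum_eq_zero_iff.mp h1) i hi
      omega
    have hsub : ∀ u : Fin n, ε.1 u = true →
        ∃ i, 1 ≤ i ∧ i ≤ k ∧ (u : ℕ) + 1 = aF k lam i := by
      intro u hu
      by_contra hne
      push_neg at hne
      have htn : (u : ℕ) + 1 ≤ n := u.isLt
      have hta1 : (u : ℕ) + 1 ≤ k + lam 1 := by
        by_contra hgt
        push_neg at hgt
        have := hminus u hgt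
        rw [hu] at this
        exact Bool.noConfusion this
      have ha1 : aF k lam 1 = k + lam 1 := by rw [aF_eq k lam (show 1 ≤ k by omega)]; omega
      set t : ℕ := (u : ℕ) + 1 with hts
      set S := (Finset.Icc 1 k).filter (fun i => t ≤ aF k lam i) with hS
      have hSne : S.Nonempty := by
        refine ⟨1, ?_⟩
        rw [hS, Finset.mem_filter, Finset.mem_Icc]
        exact ⟨⟨le_rfl, hk⟩, by omega⟩
      set i := S.max' hSne with hi
      have hiS : i ∈ S := S.max'_mem hSne
      rw [hS, Finset.mem_filter, Finset.mem_Icc] at hiS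
      obtain ⟨⟨hi1, hik⟩, hti⟩ := hiS
      have hlt : t < aF k lam i := lt_of_le_of_ne hti (hne i hi1 hik)
      have hgt2 : aF k lam (i + 1) < t := by
        by_cases hik' : i + 1 ≤ k
        · by_contra hle
          push_neg at hle
          have hmem : i + 1 ∈ S := by
            rw [hS, Finset.mem_filter, Finset.mem_Icc]
            exact ⟨⟨by omega, hik'⟩, hle⟩
          have := S.le_max' _ hmem
          omega
        · rw [aF_zero k lam (by omega)]; omega
      have hpv : posVal ε.1 t = true := by
        rw [posVal, dif_pos (⟨by omega, htn⟩ : 1 ≤ t ∧ t ≤ n)]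
        have heq : (⟨t - 1, by omega⟩ : Fin n) = u := Fin.ext (by change t - 1 = (u : ℕ); omega)
        rw [heq]; exact hu
      have hB := hz t (Finset.mem_Icc.mpr ⟨by omega, htn⟩) i (Finset.mem_Icc.mpr ⟨hi1, hik⟩)
      rw [if_pos ⟨hpv, hgt2, hlt⟩] at hB
      have hj1 : 1 ≤ t + i - k := by
        by_cases hik' : i + 1 ≤ k
        · rw [aF_eq k lam hik'] at hgt2; omega
        · omega
      have hjlam : t + i - k ≤ lam i := by
        rw [aF_eq k lam hik] at hlt; omega
      have hri := hr i (t + i - k)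
      rw [if_pos ⟨hi1, hj1, hjlam⟩] at hri
      omega
    have hPl : (Finset.univ.filter fun t => ε.1 t = true) = aPos := by
      apply Finset.eq_of_subset_of_card_le
      · intro u hu
        simp only [Finset.mem_filter, Finset.mem_univ, true_and] at hu
        simp only [haPos, Finset.mem_filter, Finset.mem_univ, true_and]
        exact hsub u hu
      · rw [hcard, ε.2]
    apply Subtype.ext
    rw [hwSt]
    funext u
    rw [Bool.eq_iff_iff, htf' u]
    have hmm := Finset.ext_iff.mp hPl u
    simp only [haPos, Finset.mem_filter, Finset.mem_univ, true_and] at hmm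
    exact hmm
  · -- ε = wSt → weight = 0
    intro he
    have hfe : ε.1 = tf := by
      rw [he, hwSt]
    have hP : ∀ u : Fin n, ε.1 u = true ↔ ∃ i, 1 ≤ i ∧ i ≤ k ∧ (u : ℕ) + 1 = aF k lam i := by
      intro u; rw [hfe]; exact htf' u
    simp only [weight, weightT]
    apply Finset.sum_eq_zero
    intro t ht
    apply Finset.sum_eq_zero
    intro i hi
    rw [Finset.mem_Icc] at ht hi
    have hb := haux i hi.1 hi.2
    have hA : (if posVal ε.1 t = false ∧ 1 ≤ lam i ∧ t = aF k lam i
        then r i (lam i) - 1 else 0) = 0 := by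
      rw [if_neg]
      rintro ⟨hpv, hl, hta⟩
      have hpv' : posVal ε.1 t = true := by
        rw [posVal, dif_pos (⟨by omega, by omega⟩ : 1 ≤ t ∧ t ≤ n)]
        exact (hP ⟨t - 1, by omega⟩).mpr ⟨i, hi.1, hi.2, by change t - 1 + 1 = aF k lam i; omega⟩
      rw [hpv'] at hpv
      exact Bool.noConfusion hpv
    have hB : (if posVal ε.1 t = true ∧ aF k lam (i + 1) < t ∧ t < aF k lam i
        then r i (t + i - k) else 0) = 0 := by
      rw [if_neg]
      rintro ⟨hpv, hlo, hhi⟩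
      rw [posVal] at hpv
      by_cases hrange : 1 ≤ t ∧ t ≤ n
      · rw [dif_pos hrange] at hpv
        obtain ⟨i0, g1, g2, g3⟩ := (hP _).mp hpv
        have g3' : t = aF k lam i0 := by
          change t - 1 + 1 = aF k lam i0 at g3; omega
        rcases le_or_gt i0 i with h | h
        · have := aAnti hY g1 h hi.2; omega
        · have := aAnti hY (by omega : 1 ≤ i + 1) h g2; omega
      · rw [dif_neg hrange] at hpv
        exact Bool.noConfusion hpv
    rw [hA, hB]
    omega

end
end

section
/- The ℚ(v)-linear map Φ : M′ → ℚ(v)[x_1,…,x_n] defined on basis elements by Φ(ε) = v^{−d(ε)} ∏_{t : ε_t = −} x_t is a linear isomorphism of M′ onto P(k,n), and it intertwines the operators T_i − v with ∇_i: Φ((T_i − v)·m) = ∇_i(Φ(m)) for all m ∈ M′ and all 1 ≤ i ≤ n−1. -/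
open scoped Classical

set_option maxHeartbeats 1000000
set_option synthInstance.maxHeartbeats 1000000

noncomputable section

/-! ### Auxiliary lemmas for the proof -/

section AuxProof

open MvPolynomial Finset

lemma vne : (v : F) ≠ 0 := RatFunc.X_ne_zero

/-- The set of minus positions. -/
abbrev fsetAux {n : ℕ} (ε : Fin n → Bool) : Finset (Fin n) :=
  Finset.univ.filter fun t => ε t = false

lemma mem_fsetAux {n : ℕ} {ε : Fin n → Bool} {t : Fin n} :
    t ∈ fsetAux ε ↔ ε t = false := by simp [fsetAux]

/-- The exponent function of a squarefree monomial. -/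
def expoAux {n : ℕ} (s : Finset (Fin n)) : Fin n →₀ ℕ :=
  ∑ t ∈ s, Finsupp.single t 1

lemma expoAux_apply {n : ℕ} (s : Finset (Fin n)) (t : Fin n) :
    expoAux s t = if t ∈ s then 1 else 0 := by
  classical
  rw [expoAux, ← Finsupp.applyAddHom_apply, map_sum]
  simp only [Finsupp.applyAddHom_apply, Finsupp.single_apply]
  exact Finset.sum_ite_eq' s t fun _ => 1

lemma prod_X_eq {n : ℕ} (s : Finset (Fin n)) :
    (∏ t ∈ s, (X t : MvPolynomial (Fin n) F)) = monomial (expoAux s) 1 := by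
  classical
  induction s using Finset.induction_on with
  | empty => simp [expoAux, MvPolynomial.monomial_zero']
  | @insert t s hts ih =>
      rw [Finset.prod_insert hts, ih, ← pow_one (X t), X_pow_eq_monomial, monomial_mul, one_mul]
      congr 1
      rw [expoAux, expoAux, Finset.sum_insert hts]

lemma Phi_basis (n k : ℕ) (ε : Stt n k) :
    Phi n k (Pi.basisFun F (Stt n k) ε) =
      MvPolynomial.C (v⁻¹ ^ dstat ε.1) * ∏ t ∈ fsetAux ε.1, X t :=
  Module.Basis.constr_basis _ _ _ _

lemma Phi_single (n k : ℕ) (ε : Stt n k) :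
    Phi n k (Pi.basisFun F (Stt n k) ε) =
      monomial (expoAux (fsetAux ε.1)) (v⁻¹ ^ dstat ε.1) := by
  rw [Phi_basis, prod_X_eq, C_mul_monomial, mul_one]

lemma Phi_apply (n k : ℕ) (m : M n k) :
    Phi n k m = ∑ ε : Stt n k,
      monomial (expoAux (fsetAux ε.1)) (m ε * v⁻¹ ^ dstat ε.1) := by
  rw [Phi, Module.Basis.constr_apply_fintype]
  refine Finset.sum_congr rfl fun ε _ => ?_
  rw [Pi.basisFun_equivFun, LinearEquiv.refl_apply, prod_X_eq, C_mul_monomial, mul_one,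
    smul_monomial, smul_eq_mul]

lemma coeff_Phi (n k : ℕ) (m : M n k) (d : Fin n →₀ ℕ) :
    MvPolynomial.coeff d (Phi n k m) =
      ∑ ε : Stt n k, if expoAux (fsetAux ε.1) = d then m ε * v⁻¹ ^ dstat ε.1 else 0 := by
  classical
  rw [Phi_apply, MvPolynomial.coeff_sum]
  exact Finset.sum_congr rfl fun ε _ => MvPolynomial.coeff_monomial _ _ _

lemma expo_fset_inj (n k : ℕ) :
    Function.Injective fun ε : Stt n k => expoAux (fsetAux ε.1) := by
  intro ε ε' h
  apply Subtype.ext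
  funext t
  have ht := DFunLike.congr_fun h t
  simp only [expoAux_apply, mem_fsetAux] at ht
  by_cases h1 : ε.1 t = false <;> by_cases h2 : ε'.1 t = false
  · rw [h1, h2]
  · rw [if_pos h1, if_neg h2] at ht; exact absurd ht one_ne_zero
  · rw [if_neg h1, if_pos h2] at ht; exact absurd ht.symm one_ne_zero
  · rw [Bool.not_eq_false] at h1 h2; rw [h1, h2]

lemma card_fsetAux {n k : ℕ} (ε : Stt n k) : (fsetAux ε.1).card = n - k := by
  classical
  have h := Finset.card_filter_add_card_filter_not
      (s := (Finset.univ : Finset (Fin n))) (p := fun t => ε.1 t = true)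
  have h2 : (Finset.univ.filter fun t => ¬ ε.1 t = true) = fsetAux ε.1 := by
    apply Finset.filter_congr; intro t _; simp
  rw [ε.2, h2, Finset.card_univ, Fintype.card_fin] at h
  omega

lemma expoAux_degree {n : ℕ} (s : Finset (Fin n)) : (expoAux s).degree = s.card := by
  classical
  have hsupp : (expoAux s).support = s := by
    ext t
    rw [Finsupp.mem_support_iff, expoAux_apply]
    by_cases h : t ∈ s <;> simp [h]
  rw [Finsupp.degree_apply, hsupp,
    Finset.sum_congr rfl fun t ht => by rw [expoAux_apply, if_pos ht]]
  simp

lemma swap_lt {n : ℕ} {a b : Fin n} (hab : (a : ℕ) + 1 = (b : ℕ)) {p q : Fin n}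
    (hpq : p < q) (hne : ¬(p = a ∧ q = b)) :
    Equiv.swap a b p < Equiv.swap a b q := by
  rcases eq_or_ne p a with rfl | hpa
  · have hqb : q ≠ b := fun h => hne ⟨rfl, h⟩
    have hqa : q ≠ p := (ne_of_lt hpq).symm
    rw [Equiv.swap_apply_left, Equiv.swap_apply_of_ne_of_ne hqa hqb]
    rw [Fin.lt_def] at hpq ⊢
    have h1 : (q : ℕ) ≠ (b : ℕ) := fun h => hqb (Fin.ext h)
    omega
  · rcases eq_or_ne p b with rfl | hpb
    · have hqb : q ≠ p := (ne_of_lt hpq).symm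
      have hqa : q ≠ a := by
        intro h
        rw [Fin.lt_def] at hpq
        subst h
        omega
      rw [Equiv.swap_apply_right, Equiv.swap_apply_of_ne_of_ne hqa hqb]
      rw [Fin.lt_def] at hpq ⊢
      omega
    · rw [Equiv.swap_apply_of_ne_of_ne hpa hpb]
      rcases eq_or_ne q a with rfl | hqa
      · rw [Equiv.swap_apply_left]
        rw [Fin.lt_def] at hpq ⊢
        omega
      · rcases eq_or_ne q b with rfl | hqb
        · rw [Equiv.swap_apply_right]
          rw [Fin.lt_def] at hpq ⊢
          have h1 : (p : ℕ) ≠ (a : ℕ) := fun h => hpa (Fin.ext h)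
          omega
        · rw [Equiv.swap_apply_of_ne_of_ne hqa hqb]
          exact hpq

lemma dstat_swap {n : ℕ} {a b : Fin n} (hab : (a : ℕ) + 1 = (b : ℕ)) {ε : Fin n → Bool}
    (ha : ε a = true) (hb : ε b = false) :
    dstat (fun t => ε (Equiv.swap a b t)) = dstat ε + 1 := by
  classical
  have hlt : a < b := by rw [Fin.lt_def]; omega
  have hne : a ≠ b := ne_of_lt hlt
  simp only [dstat]
  set P : Finset (Fin n × Fin n) :=
    Finset.univ.filter fun pq => pq.1 < pq.2 ∧ ε pq.1 = false ∧ ε pq.2 = true with hP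
  set P' : Finset (Fin n × Fin n) :=
    Finset.univ.filter fun pq =>
      pq.1 < pq.2 ∧ ε (Equiv.swap a b pq.1) = false ∧ ε (Equiv.swap a b pq.2) = true with hP'
  have hmem : (a, b) ∈ P' := by
    simp only [hP', Finset.mem_filter, Finset.mem_univ, true_and]
    refine ⟨hlt, ?_, ?_⟩
    · rw [Equiv.swap_apply_left]; exact hb
    · rw [Equiv.swap_apply_right]; exact ha
  have hbij : (P'.erase (a, b)).card = P.card := by
    apply Finset.card_bij' (fun pq _ => (Equiv.swap a b pq.1, Equiv.swap a b pq.2))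
      (fun pq _ => (Equiv.swap a b pq.1, Equiv.swap a b pq.2))
    · intro pq hpq
      rw [Finset.mem_erase] at hpq
      obtain ⟨hne', hpq⟩ := hpq
      simp only [hP', Finset.mem_filter, Finset.mem_univ, true_and] at hpq
      obtain ⟨ho, h1, h2⟩ := hpq
      simp only [hP, Finset.mem_filter, Finset.mem_univ, true_and]
      refine ⟨?_, h1, h2⟩
      apply swap_lt hab ho
      rintro ⟨hpa, hqb⟩
      exact hne' (by rw [← hpa, ← hqb])
    · intro pq hpq
      simp only [hP, Finset.mem_filter, Finset.mem_univ, true_and] at hpq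
      obtain ⟨ho, h1, h2⟩ := hpq
      rw [Finset.mem_erase]
      constructor
      · intro hc
        have hp1 : Equiv.swap a b pq.1 = a := congrArg Prod.fst hc
        have hp2 : Equiv.swap a b pq.2 = b := congrArg Prod.snd hc
        have e1 : pq.1 = b := by
          have := congrArg (Equiv.swap a b) hp1
          rwa [Equiv.swap_apply_self, Equiv.swap_apply_left] at this
        have e2 : pq.2 = a := by
          have := congrArg (Equiv.swap a b) hp2
          rwa [Equiv.swap_apply_self, Equiv.swap_apply_right] at this
        rw [e1, e2] at ho
        exact absurd hlt (not_lt_of_gt ho)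
      · simp only [hP', Finset.mem_filter, Finset.mem_univ, true_and,
          Equiv.swap_apply_self]
        refine ⟨?_, h1, h2⟩
        apply swap_lt hab ho
        rintro ⟨hpa, hqb⟩
        rw [hpa] at h1
        rw [ha] at h1
        exact Bool.noConfusion h1
    · intro pq hpq
      simp [Equiv.swap_apply_self]
    · intro pq hpq
      simp [Equiv.swap_apply_self]
  have herase := Finset.card_erase_of_mem hmem
  have hpos : 0 < P'.card := Finset.card_pos.mpr ⟨_, hmem⟩
  omega

lemma fset_swap_fun {n : ℕ} {a b : Fin n} {ε : Fin n → Bool}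
    (ha : ε a = true) (hb : ε b = false) :
    fsetAux (fun t => ε (Equiv.swap a b t)) = insert a ((fsetAux ε).erase b) := by
  classical
  have hne : a ≠ b := fun h => by rw [h, hb] at ha; exact Bool.noConfusion ha
  ext t
  simp only [fsetAux, Finset.mem_filter, Finset.mem_univ, true_and, Finset.mem_insert,
    Finset.mem_erase]
  by_cases hta : t = a
  · subst hta
    simp [Equiv.swap_apply_left, hb]
  · by_cases htb : t = b
    · subst htb
      simp [Equiv.swap_apply_right, ha, Ne.symm hne]
    · rw [Equiv.swap_apply_of_ne_of_ne hta htb]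
      simp [hta, htb]

lemma bv_eq {n k : ℕ} (ε : Stt n k) : bv ε = Pi.basisFun F (Stt n k) ε := by
  rw [bv, Pi.basisFun_apply]

lemma ddiff_spec (n i : ℕ) (h1 : 1 ≤ i) (h2 : i < n) (f g : MvPolynomial (Fin n) F)
    (hg : f - swapf n i f = (xv n i - xv n (i + 1)) * g) : ddiff n i f = g := by
  have hx1 : xv n i = (X (⟨i - 1, by omega⟩ : Fin n) : MvPolynomial (Fin n) F) := by
    rw [xv, dif_pos ⟨h1, le_of_lt h2⟩]
  have hx2 : xv n (i + 1) = (X (⟨i, h2⟩ : Fin n) : MvPolynomial (Fin n) F) := by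
    rw [xv, dif_pos (⟨by omega, by omega⟩ : 1 ≤ i + 1 ∧ i + 1 ≤ n)]
    congr 1
  have hne : xv n i - xv n (i + 1) ≠ 0 := by
    rw [hx1, hx2]
    apply sub_ne_zero.mpr
    apply MvPolynomial.X_injective.ne
    intro h
    have h' : i - 1 = i := congrArg Fin.val h
    omega
  have hex : ∃ g', f - swapf n i f = (xv n i - xv n (i + 1)) * g' := ⟨g, hg⟩
  rw [ddiff, dif_pos hex]
  exact mul_left_cancel₀ hne (hex.choose_spec.symm.trans hg)

lemma intertwine (n k : ℕ) (i : ℕ) (h1 : 1 ≤ i) (h2 : i < n) (m : M n k) :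
    Phi n k (Thk' n k i m - v • m) = nabla n i (Phi n k m) := by
  classical
  set a : Fin n := ⟨i - 1, by omega⟩ with ha_def
  set b : Fin n := ⟨i, h2⟩ with hb_def
  have hab : (a : ℕ) + 1 = (b : ℕ) := by
    rw [ha_def, hb_def]; simp; omega
  have habne : a ≠ b := by
    intro h
    have := congrArg Fin.val h
    rw [ha_def, hb_def] at this
    simp at this
    omega
  have hsperm : sperm n i = Equiv.swap a b := by
    rw [sperm, dif_pos (⟨h1, h2⟩ : 1 ≤ i ∧ i < n)]
  have hswapf : ∀ f : MvPolynomial (Fin n) F,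
      swapf n i f = MvPolynomial.rename (Equiv.swap a b) f := by
    intro f
    rw [swapf, dif_pos (⟨h1, h2⟩ : 1 ≤ i ∧ i < n)]
  have hxv1 : xv n i = (X a : MvPolynomial (Fin n) F) := by
    rw [xv, dif_pos (⟨h1, le_of_lt h2⟩ : 1 ≤ i ∧ i ≤ n)]
  have hxv2 : xv n (i + 1) = (X b : MvPolynomial (Fin n) F) := by
    rw [xv, dif_pos (⟨by omega, by omega⟩ : 1 ≤ i + 1 ∧ i + 1 ≤ n)]
    congr 1
  have hact : ∀ ε : Stt n k,
      (actS (sperm n i) ε).1 = fun u => ε.1 (Equiv.swap a b u) := by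
    intro ε
    funext u
    show ε.1 ((sperm n i)⁻¹ u) = _
    rw [hsperm, Equiv.swap_inv]
  have hCvv : (MvPolynomial.C v : MvPolynomial (Fin n) F) * MvPolynomial.C v⁻¹ = 1 := by
    rw [← map_mul, mul_inv_cancel₀ vne, map_one]
  set Dg : Stt n k → MvPolynomial (Fin n) F := fun ε =>
    if ε.1 a = ε.1 b then 0
    else (if ε.1 a = false then 1 else -1) *
      (MvPolynomial.C (v⁻¹ ^ dstat ε.1) * ∏ t ∈ ((fsetAux ε.1).erase a).erase b, X t)
    with hDg
  set Dmap : M n k →ₗ[F] MvPolynomial (Fin n) F :=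
    (Pi.basisFun F (Stt n k)).constr ℕ Dg with hDmap
  have hDbasis : ∀ ε : Stt n k, Dmap (Pi.basisFun F (Stt n k) ε) = Dg ε := fun ε =>
    Module.Basis.constr_basis _ _ _ _
  have key : ∀ ε : Stt n k,
      (Phi n k (Pi.basisFun F (Stt n k) ε)
          - MvPolynomial.rename (Equiv.swap a b) (Phi n k (Pi.basisFun F (Stt n k) ε))
        = (X a - X b) * Dg ε)
      ∧ (Phi n k (Thk' n k i (Pi.basisFun F (Stt n k) ε))
          - v • Phi n k (Pi.basisFun F (Stt n k) ε)
        = (MvPolynomial.C v * X b - MvPolynomial.C v⁻¹ * X a) * Dg ε) := by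
    intro ε
    have hThk : Thk' n k i (Pi.basisFun F (Stt n k) ε) =
        (if ε.1 a = true ∧ ε.1 b = false then bv (actS (sperm n i) ε)
         else if ε.1 a = ε.1 b then v • bv ε
         else bv (actS (sperm n i) ε) + (v - v⁻¹) • bv ε) := by
      rw [Thk', Module.Basis.constr_basis, dif_pos (⟨h1, h2⟩ : 1 ≤ i ∧ i < n)]
    cases hA : ε.1 a <;> cases hB : ε.1 b
    -- Case (false, false): equal signs
    · have heq : ε.1 a = ε.1 b := by rw [hA, hB]
      have hDg0 : Dg ε = 0 := by rw [hDg]; simp only [if_pos heq]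
      have hren : MvPolynomial.rename (Equiv.swap a b) (Phi n k (Pi.basisFun F (Stt n k) ε))
          = Phi n k (Pi.basisFun F (Stt n k) ε) := by
        rw [Phi_basis, map_mul, rename_C, map_prod]
        congr 1
        simp only [rename_X]
        apply Finset.prod_bij' (fun t _ => Equiv.swap a b t) (fun t _ => Equiv.swap a b t)
        · intro t ht
          rw [mem_fsetAux] at ht ⊢
          by_cases hta : t = a
          · subst hta; rw [Equiv.swap_apply_left, ← heq]; exact ht
          · by_cases htb : t = b
            · subst htb; rw [Equiv.swap_apply_right, heq]; exact ht
            · rw [Equiv.swap_apply_of_ne_of_ne hta htb]; exact ht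
        · intro t ht
          rw [mem_fsetAux] at ht ⊢
          by_cases hta : t = a
          · subst hta; rw [Equiv.swap_apply_left, ← heq]; exact ht
          · by_cases htb : t = b
            · subst htb; rw [Equiv.swap_apply_right, heq]; exact ht
            · rw [Equiv.swap_apply_of_ne_of_ne hta htb]; exact ht
        · intro t _; rw [Equiv.swap_apply_self]
        · intro t _; rw [Equiv.swap_apply_self]
        · intro t _; rfl
      constructor
      · rw [hren, sub_self, hDg0, mul_zero]
      · rw [hThk, if_neg (by rw [hA]; simp), if_pos heq, bv_eq, map_smul, sub_self, hDg0,
          mul_zero]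
    -- Case (false, true): (−,+)
    · have hne12 : ¬ (ε.1 a = true ∧ ε.1 b = false) := by rw [hA]; simp
      have hne2 : ¬ (ε.1 a = ε.1 b) := by rw [hA, hB]; simp
      set R : Finset (Fin n) := (fsetAux ε.1).erase a with hR
      have haf : a ∈ fsetAux ε.1 := mem_fsetAux.mpr hA
      have hbf : b ∉ fsetAux ε.1 := by rw [mem_fsetAux, hB]; simp
      have hfsε : fsetAux ε.1 = insert a R := (Finset.insert_erase haf).symm
      have haR : a ∉ R := Finset.notMem_erase _ _
      have hbR : b ∉ R := fun h => hbf (Finset.mem_of_mem_erase h)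
      have hDgR : ((fsetAux ε.1).erase a).erase b = R := by
        rw [← hR]; exact Finset.erase_eq_of_notMem hbR
      have hDgε : Dg ε = MvPolynomial.C (v⁻¹ ^ dstat ε.1) * ∏ t ∈ R, X t := by
        rw [hDg]
        simp only [if_neg hne2, if_pos hA, hDgR, one_mul]
      set ε' : Stt n k := actS (sperm n i) ε with hε'd
      have hε' : ε'.1 = fun u => ε.1 (Equiv.swap a b u) := hact ε
      have hfsε' : fsetAux ε'.1 = insert b R := by
        rw [hε']
        have h := fset_swap_fun (a := b) (b := a) hB hA
        rw [Equiv.swap_comm b a] at h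
        exact h
      have hdstat : dstat ε.1 = dstat ε'.1 + 1 := by
        have hA' : ε'.1 a = true := by rw [hε']; simp only [Equiv.swap_apply_left]; exact hB
        have hB' : ε'.1 b = false := by rw [hε']; simp only [Equiv.swap_apply_right]; exact hA
        have h := dstat_swap hab hA' hB'
        have hfun : (fun t => ε'.1 (Equiv.swap a b t)) = ε.1 := by
          funext u
          rw [hε']
          simp only [Equiv.swap_apply_self]
        rwa [hfun] at h
      have hrenR : MvPolynomial.rename (Equiv.swap a b) (∏ t ∈ R, (X t : MvPolynomial (Fin n) F))
          = ∏ t ∈ R, X t := by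
        rw [map_prod]
        refine Finset.prod_congr rfl fun t ht => ?_
        rw [rename_X, Equiv.swap_apply_of_ne_of_ne (Finset.ne_of_mem_erase ht)
          (fun h => hbR (by rw [← h]; exact ht))]
      have hprod : (∏ t ∈ fsetAux ε.1, (X t : MvPolynomial (Fin n) F)) = X a * ∏ t ∈ R, X t := by
        rw [hfsε, Finset.prod_insert haR]
      have hprod' : (∏ t ∈ fsetAux ε'.1, (X t : MvPolynomial (Fin n) F)) = X b * ∏ t ∈ R, X t := by
        rw [hfsε', Finset.prod_insert hbR]
      constructor
      · rw [Phi_basis, hprod, map_mul, rename_C, map_mul, rename_X, Equiv.swap_apply_left,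
          hrenR, hDgε]
        ring
      · rw [hThk, if_neg hne12, if_neg hne2, map_add, map_smul, bv_eq, bv_eq,
          Phi_basis, Phi_basis, hprod, hprod', hDgε, hdstat, pow_succ, map_mul,
          smul_eq_C_mul, smul_eq_C_mul, map_sub]
        linear_combination (-(MvPolynomial.C (v⁻¹ ^ dstat ε'.1) * X b * (∏ t ∈ R, X t))) * hCvv
    -- Case (true, false): (+,−)
    · have hpos12 : ε.1 a = true ∧ ε.1 b = false := ⟨hA, hB⟩
      set R : Finset (Fin n) := (fsetAux ε.1).erase b with hR
      have hbf : b ∈ fsetAux ε.1 := mem_fsetAux.mpr hB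
      have haf : a ∉ fsetAux ε.1 := by rw [mem_fsetAux, hA]; simp
      have hfsε : fsetAux ε.1 = insert b R := (Finset.insert_erase hbf).symm
      have hbR : b ∉ R := Finset.notMem_erase _ _
      have haR : a ∉ R := fun h => haf (Finset.mem_of_mem_erase h)
      have hDgR : ((fsetAux ε.1).erase a).erase b = R := by
        rw [Finset.erase_eq_of_notMem haf]
      have hDgε : Dg ε = (-1) * (MvPolynomial.C (v⁻¹ ^ dstat ε.1) * ∏ t ∈ R, X t) := by
        rw [hDg]
        simp only [if_neg (by rw [hA, hB]; simp : ¬ (ε.1 a = ε.1 b)),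
          if_neg (by rw [hA]; simp : ¬ (ε.1 a = false)), hDgR]
      set ε' : Stt n k := actS (sperm n i) ε with hε'd
      have hε' : ε'.1 = fun u => ε.1 (Equiv.swap a b u) := hact ε
      have hfsε' : fsetAux ε'.1 = insert a R := by
        rw [hε']
        exact fset_swap_fun hA hB
      have hdstat : dstat ε'.1 = dstat ε.1 + 1 := by
        rw [hε']
        exact dstat_swap hab hA hB
      have hrenR : MvPolynomial.rename (Equiv.swap a b) (∏ t ∈ R, (X t : MvPolynomial (Fin n) F))
          = ∏ t ∈ R, X t := by
        rw [map_prod]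
        refine Finset.prod_congr rfl fun t ht => ?_
        rw [rename_X, Equiv.swap_apply_of_ne_of_ne (fun h => haR (by rw [← h]; exact ht))
          (Finset.ne_of_mem_erase ht)]
      have hprod : (∏ t ∈ fsetAux ε.1, (X t : MvPolynomial (Fin n) F)) = X b * ∏ t ∈ R, X t := by
        rw [hfsε, Finset.prod_insert hbR]
      have hprod' : (∏ t ∈ fsetAux ε'.1, (X t : MvPolynomial (Fin n) F)) = X a * ∏ t ∈ R, X t := by
        rw [hfsε', Finset.prod_insert haR]
      constructor
      · rw [Phi_basis, hprod, map_mul, rename_C, map_mul, rename_X, Equiv.swap_apply_right,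
          hrenR, hDgε]
        ring
      · rw [hThk, if_pos hpos12, bv_eq, Phi_basis, Phi_basis, hprod, hprod',
          hdstat, pow_succ, map_mul, hDgε, smul_eq_C_mul]
        ring
    -- Case (true, true): equal signs
    · have heq : ε.1 a = ε.1 b := by rw [hA, hB]
      have hDg0 : Dg ε = 0 := by rw [hDg]; simp only [if_pos heq]
      have hren : MvPolynomial.rename (Equiv.swap a b) (Phi n k (Pi.basisFun F (Stt n k) ε))
          = Phi n k (Pi.basisFun F (Stt n k) ε) := by
        rw [Phi_basis, map_mul, rename_C, map_prod]
        congr 1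
        simp only [rename_X]
        apply Finset.prod_bij' (fun t _ => Equiv.swap a b t) (fun t _ => Equiv.swap a b t)
        · intro t ht
          rw [mem_fsetAux] at ht ⊢
          by_cases hta : t = a
          · subst hta; rw [Equiv.swap_apply_left, ← heq]; exact ht
          · by_cases htb : t = b
            · subst htb; rw [Equiv.swap_apply_right, heq]; exact ht
            · rw [Equiv.swap_apply_of_ne_of_ne hta htb]; exact ht
        · intro t ht
          rw [mem_fsetAux] at ht ⊢
          by_cases hta : t = a
          · subst hta; rw [Equiv.swap_apply_left, ← heq]; exact ht
          · by_cases htb : t = b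
            · subst htb; rw [Equiv.swap_apply_right, heq]; exact ht
            · rw [Equiv.swap_apply_of_ne_of_ne hta htb]; exact ht
        · intro t _; rw [Equiv.swap_apply_self]
        · intro t _; rw [Equiv.swap_apply_self]
        · intro t _; rfl
      constructor
      · rw [hren, sub_self, hDg0, mul_zero]
      · rw [hThk, if_neg (by rw [hB]; simp), if_pos heq, bv_eq, map_smul, sub_self, hDg0,
          mul_zero]
  -- extend to all of M by linearity
  have hlin1 : (Phi n k) - (MvPolynomial.rename (Equiv.swap a b)).toLinearMap ∘ₗ (Phi n k)
      = (LinearMap.mulLeft F ((X a : MvPolynomial (Fin n) F) - X b)) ∘ₗ Dmap := by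
    apply Module.Basis.ext (Pi.basisFun F (Stt n k))
    intro ε
    simp only [LinearMap.sub_apply, LinearMap.coe_comp, Function.comp_apply,
      AlgHom.toLinearMap_apply, LinearMap.mulLeft_apply, hDbasis]
    exact (key ε).1
  have hlin2 : (Phi n k) ∘ₗ (Thk' n k i) - v • (Phi n k)
      = (LinearMap.mulLeft F
          (MvPolynomial.C v * X b - MvPolynomial.C v⁻¹ * X a)) ∘ₗ Dmap := by
    apply Module.Basis.ext (Pi.basisFun F (Stt n k))
    intro ε
    simp only [LinearMap.sub_apply, LinearMap.coe_comp, Function.comp_apply,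
      LinearMap.smul_apply, LinearMap.mulLeft_apply, hDbasis]
    exact (key ε).2
  have e1 := LinearMap.congr_fun hlin1 m
  simp only [LinearMap.sub_apply, LinearMap.coe_comp, Function.comp_apply,
    AlgHom.toLinearMap_apply, LinearMap.mulLeft_apply] at e1
  have e2 := LinearMap.congr_fun hlin2 m
  simp only [LinearMap.sub_apply, LinearMap.coe_comp, Function.comp_apply,
    LinearMap.smul_apply, LinearMap.mulLeft_apply] at e2
  have hdd : ddiff n i (Phi n k m) = Dmap m := by
    apply ddiff_spec n i h1 h2
    rw [hswapf, hxv1, hxv2]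
    exact e1
  rw [map_sub, map_smul, nabla, hxv1, hxv2, hdd]
  exact e2

end AuxProof

/-- Φ : M′ → ℚ(v)[x_1,…,x_n], ε ↦ v^(−d(ε)) ∏_(ε_t = −) x_t, is a
linear isomorphism onto P(k,n) intertwining T_i − v with ∇_i. -/
theorem Phi_isomorphism (n k : ℕ) (hk : 0 < k) (hkn : k < n) :
    Function.Injective (Phi n k) ∧
    Set.range (Phi n k) = Pspace n k ∧
    (∀ m : M n k, ∀ i : ℕ, 1 ≤ i → i < n →
      Phi n k (Thk' n k i m - v • m) = nabla n i (Phi n k m)) := by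
  classical
  refine ⟨?_, ?_, fun m i hi1 hi2 => intertwine n k i hi1 hi2 m⟩
  · -- injectivity
    intro m1 m2 heq
    funext ε₀
    have h := congrArg (MvPolynomial.coeff (expoAux (fsetAux ε₀.1))) heq
    rw [coeff_Phi, coeff_Phi] at h
    rw [Finset.sum_eq_single ε₀
        (fun ε' _ hne => if_neg fun hc => hne (expo_fset_inj n k hc))
        (fun habs => absurd (Finset.mem_univ ε₀) habs),
      Finset.sum_eq_single ε₀
        (fun ε' _ hne => if_neg fun hc => hne (expo_fset_inj n k hc))
        (fun habs => absurd (Finset.mem_univ ε₀) habs),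
      if_pos rfl, if_pos rfl] at h
    exact mul_right_cancel₀ (pow_ne_zero _ (inv_ne_zero vne)) h
  · -- range
    ext f
    constructor
    · rintro ⟨m, rfl⟩
      constructor
      · rw [Phi_apply]
        apply MvPolynomial.IsHomogeneous.sum
        intro ε _
        exact MvPolynomial.isHomogeneous_monomial _
          (by rw [expoAux_degree, card_fsetAux])
      · intro t
        rw [MvPolynomial.degreeOf_le_iff]
        intro d hd
        rw [MvPolynomial.mem_support_iff, coeff_Phi] at hd
        by_contra hgt
        apply hd
        apply Finset.sum_eq_zero
        intro ε _
        rw [if_neg]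
        intro hc
        have hct := DFunLike.congr_fun hc t
        rw [expoAux_apply] at hct
        have : d t ≤ 1 := by
          rw [← hct]
          split <;> omega
        exact hgt this
    · rintro ⟨hhom, hdeg⟩
      have hmem : f ∈ LinearMap.range (Phi n k) := by
        rw [← MvPolynomial.support_sum_monomial_coeff f]
        apply Submodule.sum_mem
        intro d hd
        have hcoeff : MvPolynomial.coeff d f ≠ 0 := MvPolynomial.mem_support_iff.mp hd
        have hd1 : ∀ t, d t ≤ 1 := fun t =>
          MvPolynomial.degreeOf_le_iff.mp (hdeg t) d hd
        have hdeg' : d.degree = n - k := by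
          rw [Finsupp.degree_eq_weight_one]
          exact hhom hcoeff
        have hsupp1 : ∀ t ∈ d.support, d t = 1 := fun t ht => by
          have h1 := Finsupp.mem_support_iff.mp ht
          have h2 := hd1 t
          omega
        have hcard : d.support.card = n - k := by
          have h3 : d.degree = d.support.card := by
            rw [Finsupp.degree_apply, Finset.sum_congr rfl hsupp1]
            simp
          omega
        set ε : Fin n → Bool := fun t => decide (d t = 0) with hε
        have hεt : ∀ t, ε t = true ↔ d t = 0 := fun t => by
          rw [hε]; simp
        have hεf : ∀ t, ε t = false ↔ d t = 1 := fun t => by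
          rw [hε]
          simp only [decide_eq_false_iff_not]
          have := hd1 t
          omega
        have hcardk : (Finset.univ.filter fun t => ε t = true).card = k := by
          have h1 : (Finset.univ.filter fun t => ε t = true) = Finset.univ \ d.support := by
            ext t
            simp [hεt t, Finsupp.mem_support_iff]
          rw [h1, Finset.card_sdiff_of_subset (Finset.subset_univ _), Finset.card_univ,
            Fintype.card_fin, hcard]
          omega
        set εS : Stt n k := ⟨ε, hcardk⟩ with hεS
        have hexpo : expoAux (fsetAux ε) = d := by
          apply DFunLike.ext
          intro t
          rw [expoAux_apply]
          by_cases hft : ε t = false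
          · rw [if_pos (mem_fsetAux.mpr hft), (hεf t).mp hft]
          · rw [if_neg (fun hc => hft (mem_fsetAux.mp hc))]
            have ht : ε t = true := by
              cases h : ε t
              · exact absurd h hft
              · rfl
            exact ((hεt t).mp ht).symm
        refine ⟨(MvPolynomial.coeff d f * v ^ dstat ε) • Pi.basisFun F (Stt n k) εS, ?_⟩
        rw [map_smul, Phi_single]
        have hv1 : (v : F) ^ dstat ε * v⁻¹ ^ dstat ε = 1 := by
          rw [← mul_pow, mul_inv_cancel₀ vne, one_pow]
        show (MvPolynomial.coeff d f * v ^ dstat ε) •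
            MvPolynomial.monomial (expoAux (fsetAux εS.1)) (v⁻¹ ^ dstat εS.1) = _
        rw [show εS.1 = ε from rfl, hexpo, MvPolynomial.smul_monomial, smul_eq_mul,
          mul_assoc, hv1, mul_one]
      obtain ⟨m, hm⟩ := hmem
      exact ⟨m, hm⟩

end
end
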